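/- Let β ∈ (0,1) and γ ∈ (1, (1−β)^{−1}). There exists a constant C, depending only on β and γ, with the following property: for every a > 0, all real numbers s and T with s + 1 ≤ T, and every nonnegative measurable function h : ℝ → [0,∞) such that for all t ∈ [s, T−1] one has ∫_s^t h(r) dr ≤ ( a^{β−1} + (1−β)·(T−t) )^{−1/(1−β)}, it holds that ∫_s^{T−1} (T−r)^{γ} h(r) dr ≤ C · a^{1 − γ(1−β)}. -/

import Mathlib

open MeasureTheory ENNReal Set

lemma lint_rpow_Ioc (γ : ℝ) (hγ : 0 < γ) (m M : ℝ) (hm : 0 < m) (hmM : m ≤ M) :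
    ∫⁻ u in Ioc m M, ENNReal.ofReal (γ * u ^ (γ - 1)) = ENNReal.ofReal (M ^ γ - m ^ γ) := by
  have hint : IntegrableOn (fun u : ℝ => γ * u ^ (γ - 1)) (Ioc m M) := by
    apply (ContinuousOn.integrableOn_Icc ?_).mono_set Ioc_subset_Icc_self
    exact continuousOn_const.mul (continuousOn_id.rpow_const (fun x hx => Or.inl (hm.trans_le hx.1).ne'))
  rw [← MeasureTheory.ofReal_integral_eq_lintegral_ofReal hint ?_]
  · congr 1
    rw [← intervalIntegral.integral_of_le hmM, intervalIntegral.integral_const_mul,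
      integral_rpow (Or.inl (by linarith))]
    have : γ - 1 + 1 = γ := by ring
    rw [this]
    field_simp
  · filter_upwards [ae_restrict_mem measurableSet_Ioc] with u hu
    have hu0 : 0 < u := hm.trans hu.1
    simp only [Pi.zero_apply]
    positivity

lemma lint_rpow_Ioi (p : ℝ) (hp : p < -1) (M : ℝ) (hM : 0 < M) :
    ∫⁻ u in Ioi M, ENNReal.ofReal (u ^ p) = ENNReal.ofReal (-M ^ (p + 1) / (p + 1)) := by
  rw [← MeasureTheory.ofReal_integral_eq_lintegral_ofReal (integrableOn_Ioi_rpow_of_lt hp hM) ?_]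
  · rw [integral_Ioi_rpow_of_lt hp hM]
  · filter_upwards [ae_restrict_mem measurableSet_Ioi] with u hu
    have hu0 : 0 < u := hM.trans hu
    simp only [Pi.zero_apply]
    positivity

lemma key_bound (γ q c A : ℝ) (hγ : 1 < γ) (hγq : γ < q) (hc : 0 < c) (hA : 0 < A) :
    ∫⁻ u in Ioi (1:ℝ), ENNReal.ofReal (γ * u ^ (γ - 1)) * ENNReal.ofReal ((A + c * u) ^ (-q)) ≤
      ENNReal.ofReal ((1 + γ / (q - γ)) * (A ^ (γ - q) * c ^ (-γ))) := by
  have hγ0 : 0 < γ := by linarith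
  have hqγ : 0 < q - γ := by linarith
  set M : ℝ := max 1 (A / c) with hM
  have hM1 : (1:ℝ) ≤ M := le_max_left _ _
  have hM0 : (0:ℝ) < M := by linarith
  -- split the domain
  have hsplit : Ioi (1:ℝ) = Ioc 1 M ∪ Ioi M := (Ioc_union_Ioi_eq_Ioi hM1).symm
  rw [hsplit, lintegral_union measurableSet_Ioi (Ioc_disjoint_Ioi le_rfl)]
  -- part 1
  have part1 : ∫⁻ u in Ioc (1:ℝ) M, ENNReal.ofReal (γ * u ^ (γ - 1)) * ENNReal.ofReal ((A + c * u) ^ (-q)) ≤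
      ENNReal.ofReal ((M ^ γ - 1) * A ^ (-q)) := by
    calc ∫⁻ u in Ioc (1:ℝ) M, ENNReal.ofReal (γ * u ^ (γ - 1)) * ENNReal.ofReal ((A + c * u) ^ (-q))
        ≤ ∫⁻ u in Ioc (1:ℝ) M, ENNReal.ofReal (γ * u ^ (γ - 1)) * ENNReal.ofReal (A ^ (-q)) := by
          apply lintegral_mono_ae
          filter_upwards [ae_restrict_mem measurableSet_Ioc] with u hu
          have hu0 : (0:ℝ) < u := by have := hu.1; linarith
          exact mul_le_mul_right (ENNReal.ofReal_le_ofReal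
            (Real.rpow_le_rpow_of_nonpos hA (by nlinarith) (by linarith))) _
      _ = ENNReal.ofReal (M ^ γ - 1 ^ γ) * ENNReal.ofReal (A ^ (-q)) := by
          rw [lintegral_mul_const' _ _ ENNReal.ofReal_ne_top,
            lint_rpow_Ioc γ hγ0 1 M one_pos hM1]
      _ ≤ ENNReal.ofReal ((M ^ γ - 1) * A ^ (-q)) := by
          have h1M : (1:ℝ) ≤ M ^ γ := by
            simpa using Real.rpow_le_rpow zero_le_one hM1 hγ0.le
          rw [Real.one_rpow, ← ENNReal.ofReal_mul (by nlinarith [Real.rpow_nonneg hA.le (-q)])]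
  -- part 2
  have part2 : ∫⁻ u in Ioi M, ENNReal.ofReal (γ * u ^ (γ - 1)) * ENNReal.ofReal ((A + c * u) ^ (-q)) ≤
      ENNReal.ofReal (γ / (q - γ) * (c ^ (-q) * M ^ (γ - q))) := by
    calc ∫⁻ u in Ioi M, ENNReal.ofReal (γ * u ^ (γ - 1)) * ENNReal.ofReal ((A + c * u) ^ (-q))
        ≤ ∫⁻ u in Ioi M, ENNReal.ofReal (γ * c ^ (-q)) * ENNReal.ofReal (u ^ (γ - 1 - q)) := by
          apply lintegral_mono_ae
          filter_upwards [ae_restrict_mem measurableSet_Ioi] with u hu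
          have hu0 : (0:ℝ) < u := lt_of_lt_of_le hM0 (le_of_lt hu)
          rw [← ENNReal.ofReal_mul (by positivity), ← ENNReal.ofReal_mul (by positivity)]
          apply ENNReal.ofReal_le_ofReal
          have h1 : (A + c * u) ^ (-q) ≤ (c * u) ^ (-q) :=
            Real.rpow_le_rpow_of_nonpos (by positivity) (by linarith) (by linarith)
          have h2 : (c * u) ^ (-q) = c ^ (-q) * u ^ (-q) :=
            Real.mul_rpow hc.le hu0.le
          calc γ * u ^ (γ - 1) * (A + c * u) ^ (-q) ≤ γ * u ^ (γ - 1) * ((c*u) ^ (-q)) := by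
                apply mul_le_mul_of_nonneg_left h1 (by positivity)
            _ = γ * c ^ (-q) * u ^ (γ - 1 - q) := by
                rw [h2, show γ - 1 - q = (γ - 1) + (-q) by ring, Real.rpow_add hu0]; ring
      _ = ENNReal.ofReal (γ * c ^ (-q)) * ENNReal.ofReal (-M ^ (γ - q) / (γ - q)) := by
          rw [lintegral_const_mul' _ _ ENNReal.ofReal_ne_top,
            lint_rpow_Ioi (γ - 1 - q) (by linarith) M hM0,
            show γ - 1 - q + 1 = γ - q by ring]
      _ ≤ ENNReal.ofReal (γ / (q - γ) * (c ^ (-q) * M ^ (γ - q))) := by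
          rw [← ENNReal.ofReal_mul (by positivity)]
          apply le_of_eq
          congr 1
          have e : -M ^ (γ - q) / (γ - q) = M ^ (γ - q) / (q - γ) := by
            rw [neg_div, ← div_neg, neg_sub]
          rw [e]; ring
  -- combine
  refine le_trans (add_le_add part1 part2) ?_
  have h1M : (1:ℝ) ≤ M ^ γ := by
    simpa using Real.rpow_le_rpow zero_le_one hM1 hγ0.le
  rw [← ENNReal.ofReal_add (by nlinarith [Real.rpow_nonneg hA.le (-q)]) (by positivity)]
  apply ENNReal.ofReal_le_ofReal
  rcases le_total (A / c) 1 with hAc | hAc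
  · -- A ≤ c, M = 1
    have hMe : M = 1 := max_eq_left hAc
    have hAc' : A ≤ c := (div_le_one hc).mp hAc
    have e1 : c ^ (-q) = c ^ (γ - q) * c ^ (-γ) := by
      rw [← Real.rpow_add hc]; ring_nf
    have e2 : c ^ (γ - q) ≤ A ^ (γ - q) :=
      Real.rpow_le_rpow_of_nonpos hA hAc' (by linarith)
    have hcγ : (0:ℝ) < c ^ (-γ) := Real.rpow_pos_of_pos hc _
    have hAq : (0:ℝ) ≤ A ^ (γ - q) := Real.rpow_nonneg hA.le _
    have hgq : (0:ℝ) < γ / (q - γ) := by positivity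
    rw [hMe, Real.one_rpow]
    simp only [sub_self, zero_mul, zero_add]
    calc γ / (q - γ) * (c ^ (-q) * 1 ^ (γ - q))
        = γ / (q - γ) * (c ^ (γ - q) * c ^ (-γ)) := by rw [Real.one_rpow, mul_one, e1]
      _ ≤ (1 + γ / (q - γ)) * (A ^ (γ - q) * c ^ (-γ)) := by
          have s1 : c ^ (γ - q) * c ^ (-γ) ≤ A ^ (γ - q) * c ^ (-γ) :=
            mul_le_mul_of_nonneg_right e2 hcγ.le
          nlinarith [mul_le_mul_of_nonneg_left s1 hgq.le, mul_nonneg hAq hcγ.le]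
  · -- c ≤ A, M = A / c
    have hMe : M = A / c := max_eq_right hAc
    have e1 : M ^ γ * A ^ (-q) = A ^ (γ - q) * c ^ (-γ) := by
      rw [hMe, Real.div_rpow hA.le hc.le, div_mul_eq_mul_div, ← Real.rpow_add hA,
        show γ + -q = γ - q by ring, Real.rpow_neg hc.le, div_eq_mul_inv]
    have e2 : c ^ (-q) * M ^ (γ - q) = A ^ (γ - q) * c ^ (-γ) := by
      rw [hMe, Real.div_rpow hA.le hc.le, Real.rpow_neg hc.le q, div_eq_mul_inv]
      rw [show ((c ^ q)⁻¹ * (A ^ (γ - q) * (c ^ (γ - q))⁻¹) : ℝ)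
          = A ^ (γ - q) * (c ^ q * c ^ (γ - q))⁻¹ by rw [mul_inv]; ring,
        ← Real.rpow_add hc, show q + (γ - q) = γ by ring, ← Real.rpow_neg hc.le]
    have hAq : (0:ℝ) ≤ A ^ (-q) := Real.rpow_nonneg hA.le _
    have hgq : (0:ℝ) < γ / (q - γ) := by positivity
    nlinarith [e1, e2, Real.rpow_pos_of_pos hA (γ - q), Real.rpow_pos_of_pos hc (-γ)]

lemma first_bound (γ q c A : ℝ) (hγ : 1 < γ) (hγq : γ < q) (hc : 0 < c) (hA : 0 < A) :
    (A + c) ^ (-q) ≤ A ^ (γ - q) * c ^ (-γ) := by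
  have hq0 : 0 < q := by linarith
  rcases le_total A c with hAc | hAc
  · calc (A + c) ^ (-q) ≤ c ^ (-q) :=
        Real.rpow_le_rpow_of_nonpos hc (by linarith) (by linarith)
      _ = c ^ (γ - q) * c ^ (-γ) := by rw [← Real.rpow_add hc]; ring_nf
      _ ≤ A ^ (γ - q) * c ^ (-γ) := by
          have := Real.rpow_le_rpow_of_nonpos hA hAc (show γ - q ≤ 0 by linarith)
          exact mul_le_mul_of_nonneg_right this (Real.rpow_nonneg hc.le (-γ))
  · calc (A + c) ^ (-q) ≤ A ^ (-q) :=
        Real.rpow_le_rpow_of_nonpos hA (by linarith) (by linarith)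
      _ = A ^ (γ - q) * A ^ (-γ) := by rw [← Real.rpow_add hA]; ring_nf
      _ ≤ A ^ (γ - q) * c ^ (-γ) := by
          have := Real.rpow_le_rpow_of_nonpos hc hAc (show -γ ≤ 0 by linarith)
          exact mul_le_mul_of_nonneg_left this (Real.rpow_nonneg hA.le _)

/-- Second weighted integral bound of Lemma 3.7: for `β ∈ (0,1)` and `γ ∈ (1, (1-β)⁻¹)`
there is a constant `C = C(β,γ)` so that whenever `a > 0`, `s + 1 ≤ T` and `h ≥ 0` is
measurable with bound `∫_s^t h ≤ (a^(β-1) + (1-β)(T-t))^(-1/(1-β))` for all `t ∈ [s,T-1]`,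
one has `∫_s^{T-1} (T-r)^γ h(r) dr ≤ C a^(1-γ(1-β))`. -/
theorem weighted_integral_bound_second (β γ : ℝ) (hβ : β ∈ Set.Ioo (0 : ℝ) 1)
    (hγ : γ ∈ Set.Ioo (1 : ℝ) (1 - β)⁻¹) :
    ∃ C > 0, ∀ a : ℝ, 0 < a → ∀ s T : ℝ, s + 1 ≤ T → ∀ h : ℝ → NNReal, Measurable h →
      (∀ t ∈ Set.Icc s (T - 1),
        (∫⁻ r in Set.Ioc s t, (h r : ℝ≥0∞)) ≤
          ENNReal.ofReal ((a ^ (β - 1) + (1 - β) * (T - t)) ^ (-(1 - β)⁻¹))) →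
      (∫⁻ r in Set.Ioc s (T - 1), ENNReal.ofReal ((T - r) ^ γ) * (h r : ℝ≥0∞)) ≤
        ENNReal.ofReal (C * a ^ (1 - γ * (1 - β))) := by
  obtain ⟨hβ0, hβ1⟩ := hβ
  obtain ⟨hγ1, hγq'⟩ := hγ
  set c : ℝ := 1 - β with hcdef
  set q : ℝ := (1 - β)⁻¹ with hqdef
  have hc : 0 < c := by simp only [hcdef]; linarith
  have hγq : γ < q := hγq'
  have hγ0 : 0 < γ := by linarith
  have hqγ : 0 < q - γ := by linarith
  refine ⟨(2 + γ / (q - γ)) * c ^ (-γ), by positivity, ?_⟩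
  intro a ha s T hsT h hmeas hbound
  set A : ℝ := a ^ (β - 1) with hAdef
  have hA : 0 < A := Real.rpow_pos_of_pos ha _
  have hApow : A ^ (γ - q) = a ^ (1 - γ * (1 - β)) := by
    rw [hAdef, ← Real.rpow_mul ha.le]
    congr 1
    have hne : (1:ℝ) - β ≠ 0 := by linarith
    rw [hqdef]
    field_simp
    ring
  have hg_meas : Measurable fun u : ℝ => ENNReal.ofReal (γ * u ^ (γ - 1)) :=
    (measurable_const.mul
      ((Real.continuous_rpow_const (by linarith : (0:ℝ) ≤ γ - 1)).measurable)).ennreal_ofReal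
  -- Step A : rewrite weight
  have stepA : ∫⁻ r in Ioc s (T - 1), ENNReal.ofReal ((T - r) ^ γ) * (h r : ℝ≥0∞)
      = ∫⁻ r in Ioc s (T - 1),
          ((1 : ℝ≥0∞) + ∫⁻ u in Ioc 1 (T - r), ENNReal.ofReal (γ * u ^ (γ - 1))) * (h r : ℝ≥0∞) := by
    apply setLIntegral_congr_fun measurableSet_Ioc
    intro r hr
    beta_reduce
    have hr1 : (1:ℝ) ≤ T - r := by have := hr.2; linarith
    rw [lint_rpow_Ioc γ hγ0 1 (T - r) one_pos hr1, Real.one_rpow]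
    have h1 : (1:ℝ) ≤ (T - r) ^ γ := by
      simpa using Real.rpow_le_rpow zero_le_one hr1 hγ0.le
    rw [← ENNReal.ofReal_one, ← ENNReal.ofReal_add zero_le_one (by linarith)]
    norm_num
  rw [stepA]
  -- split into two integrals
  have split : ∫⁻ r in Ioc s (T - 1),
      ((1 : ℝ≥0∞) + ∫⁻ u in Ioc 1 (T - r), ENNReal.ofReal (γ * u ^ (γ - 1))) * (h r : ℝ≥0∞)
      = (∫⁻ r in Ioc s (T - 1), (h r : ℝ≥0∞)) +
        ∫⁻ r in Ioc s (T - 1),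
          (∫⁻ u in Ioc 1 (T - r), ENNReal.ofReal (γ * u ^ (γ - 1))) * (h r : ℝ≥0∞) := by
    rw [← lintegral_add_left (hmeas.coe_nnreal_ennreal)]
    congr 1
    funext r
    rw [add_mul, one_mul]
  rw [split]
  -- first term
  have hterm1 : (∫⁻ r in Ioc s (T - 1), (h r : ℝ≥0∞)) ≤
      ENNReal.ofReal (A ^ (γ - q) * c ^ (-γ)) := by
    refine le_trans (hbound (T - 1) ⟨by linarith, le_refl _⟩) ?_
    apply ENNReal.ofReal_le_ofReal
    rw [show T - (T - 1) = 1 by ring, mul_one]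
    exact first_bound γ q c A hγ1 hγq hc hA
  -- second term : Fubini
  have hS : MeasurableSet {p : ℝ × ℝ | 1 < p.2 ∧ p.2 ≤ T - p.1} :=
    (measurableSet_lt measurable_const measurable_snd).inter
      (measurableSet_le measurable_snd (measurable_const.sub measurable_fst))
  have hf_meas : Measurable (fun p : ℝ × ℝ =>
      (Ioc 1 (T - p.1)).indicator (fun u => ENNReal.ofReal (γ * u ^ (γ - 1))) p.2
        * (h p.1 : ℝ≥0∞)) := by
    have e : (fun p : ℝ × ℝ =>
        (Ioc 1 (T - p.1)).indicator (fun u => ENNReal.ofReal (γ * u ^ (γ - 1))) p.2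
          * (h p.1 : ℝ≥0∞))
        = {p : ℝ × ℝ | 1 < p.2 ∧ p.2 ≤ T - p.1}.indicator
            (fun p => ENNReal.ofReal (γ * p.2 ^ (γ - 1)) * (h p.1 : ℝ≥0∞)) := by
      funext p
      simp only [Set.indicator_apply, mem_Ioc, mem_setOf_eq]
      rw [ite_mul, zero_mul]
    rw [e]
    exact ((hg_meas.comp measurable_snd).mul
      (measurable_coe_nnreal_ennreal.comp (hmeas.comp measurable_fst))).indicator hS
  have hswap : ∫⁻ r in Ioc s (T - 1),
        (∫⁻ u in Ioc 1 (T - r), ENNReal.ofReal (γ * u ^ (γ - 1))) * (h r : ℝ≥0∞)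
      = ∫⁻ u, ∫⁻ r in Ioc s (T - 1),
          (Ioc 1 (T - r)).indicator (fun u => ENNReal.ofReal (γ * u ^ (γ - 1))) u
            * (h r : ℝ≥0∞) := by
    rw [← lintegral_lintegral_swap (hf_meas.aemeasurable)]
    apply lintegral_congr
    intro r
    rw [← lintegral_indicator measurableSet_Ioc, ← lintegral_mul_const' _ _ coe_ne_top]
  rw [hswap]
  -- bound the inner integral
  have hinner : ∀ u : ℝ, (∫⁻ r in Ioc s (T - 1),
        (Ioc 1 (T - r)).indicator (fun u => ENNReal.ofReal (γ * u ^ (γ - 1))) u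
          * (h r : ℝ≥0∞))
      ≤ (Ioi (1:ℝ)).indicator
          (fun u => ENNReal.ofReal (γ * u ^ (γ - 1)) * ENNReal.ofReal ((A + c * u) ^ (-q))) u := by
    intro u
    by_cases hu : 1 < u
    · rw [Set.indicator_of_mem (by exact hu : u ∈ Ioi (1:ℝ))]
      have e1 : ∀ r : ℝ, (Ioc 1 (T - r)).indicator
            (fun u => ENNReal.ofReal (γ * u ^ (γ - 1))) u * (h r : ℝ≥0∞)
          = (Iic (T - u)).indicator
              (fun r => ENNReal.ofReal (γ * u ^ (γ - 1)) * (h r : ℝ≥0∞)) r := by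
        intro r
        by_cases hru : r ≤ T - u
        · rw [Set.indicator_of_mem (by exact hru : r ∈ Iic (T - u)),
            Set.indicator_of_mem (mem_Ioc.mpr ⟨hu, by linarith⟩)]
        · rw [Set.indicator_of_notMem (by exact hru : r ∉ Iic (T - u)),
            Set.indicator_of_notMem (fun hmem => hru (by have := hmem.2; linarith)), zero_mul]
      rw [lintegral_congr e1, lintegral_indicator measurableSet_Iic,
        Measure.restrict_restrict measurableSet_Iic]
      have hset : Iic (T - u) ∩ Ioc s (T - 1) = Ioc s (T - u) := by
        ext r
        simp only [mem_inter_iff, mem_Iic, mem_Ioc]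
        constructor
        · rintro ⟨h1, h2, _⟩; exact ⟨h2, h1⟩
        · rintro ⟨h1, h2⟩; exact ⟨h2, h1, by linarith⟩
      rw [hset, lintegral_const_mul' _ _ ENNReal.ofReal_ne_top]
      apply mul_le_mul_right
      rcases le_or_gt s (T - u) with hsu | hsu
      · refine le_trans (hbound (T - u) ⟨hsu, by linarith⟩) ?_
        rw [show T - (T - u) = u by ring]
      · rw [Set.Ioc_eq_empty (by linarith), Measure.restrict_empty, lintegral_zero_measure]
        exact bot_le
    · have e0 : ∀ r : ℝ, (Ioc 1 (T - r)).indicator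
            (fun u => ENNReal.ofReal (γ * u ^ (γ - 1))) u * (h r : ℝ≥0∞) = 0 := by
        intro r
        rw [Set.indicator_of_notMem (fun hmem => hu hmem.1), zero_mul]
      rw [lintegral_congr e0, lintegral_zero]
      exact bot_le
  -- conclude
  calc (∫⁻ r in Ioc s (T - 1), (h r : ℝ≥0∞)) +
        ∫⁻ u, ∫⁻ r in Ioc s (T - 1),
          (Ioc 1 (T - r)).indicator (fun u => ENNReal.ofReal (γ * u ^ (γ - 1))) u
            * (h r : ℝ≥0∞)
      ≤ ENNReal.ofReal (A ^ (γ - q) * c ^ (-γ)) +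
        ∫⁻ u in Ioi (1:ℝ),
          ENNReal.ofReal (γ * u ^ (γ - 1)) * ENNReal.ofReal ((A + c * u) ^ (-q)) := by
        refine add_le_add hterm1 ?_
        refine le_trans (lintegral_mono hinner) ?_
        rw [lintegral_indicator measurableSet_Ioi]
    _ ≤ ENNReal.ofReal (A ^ (γ - q) * c ^ (-γ)) +
        ENNReal.ofReal ((1 + γ / (q - γ)) * (A ^ (γ - q) * c ^ (-γ))) :=
        add_le_add_right (key_bound γ q c A hγ1 hγq hc hA) _
    _ ≤ ENNReal.ofReal ((2 + γ / (q - γ)) * c ^ (-γ) * a ^ (1 - γ * (1 - β))) := by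
        rw [← ENNReal.ofReal_add (by positivity) (by positivity)]
        apply ENNReal.ofReal_le_ofReal
        apply le_of_eq
        rw [← hApow]
        ring
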